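/- Let m be a positive integer. There exists a constant C > 1 depending only on m such that for all p ∈ (0, m), α ∈ (0, p) and ℓ ≥ 1, one has ∫_{w ∈ ℝ^m, |z−w| ≤ ℓ} |w|^(−p) dw ≤ (C/(m−p)) ℓ^(m−p+α) ⟨z⟩^(−α) for all z ∈ ℝ^m. -/

import Mathlib

set_option maxHeartbeats 1000000


open MeasureTheory Set Metric Real

private lemma keycalc (R p : ℝ) (hR : 0 < R) (k : ℕ) (mm : ℝ) :
    (R * (2:ℝ)^(-((k:ℝ)+1)))^(-p) * (R * (2:ℝ)^(-(k:ℝ)))^mm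
      = R^(mm-p) * (2:ℝ)^p * (2:ℝ)^(-((mm-p)*(k:ℝ))) := by
  have h2 : (0:ℝ) < 2 := by norm_num
  rw [Real.mul_rpow hR.le (Real.rpow_pos_of_pos h2 _).le,
      Real.mul_rpow hR.le (Real.rpow_pos_of_pos h2 _).le,
      ← Real.rpow_mul h2.le, ← Real.rpow_mul h2.le]
  rw [show R ^ (-p) * 2 ^ (-((k:ℝ) + 1) * -p) * (R ^ mm * 2 ^ (-(k:ℝ) * mm))
      = (R ^ (-p) * R ^ mm) * (2 ^ (-((k:ℝ) + 1) * -p) * 2 ^ (-(k:ℝ) * mm)) by ring,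
    ← Real.rpow_add hR, ← Real.rpow_add h2, mul_assoc, ← Real.rpow_add h2,
    show -p + mm = mm - p by ring, show -((k:ℝ)+1) * -p + -(k:ℝ)*mm = p + -((mm-p)*(k:ℝ)) by ring]

private lemma geom_aux (m : ℕ) {s : ℝ} (hs : 0 < s) (hsm : s ≤ m) :
    (2:ℝ) ^ (-s) ≤ 1 - s / 2 ^ (m+1) := by
  have h2 : (0:ℝ) < 2 := by norm_num
  have he : (2:ℝ)^s = Real.exp (Real.log 2 * s) := Real.rpow_def_of_pos h2 s
  have h1 : Real.log 2 * s + 1 ≤ (2:ℝ)^s := by rw [he]; exact Real.add_one_le_exp _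
  have hlog : s / 2 ≤ Real.log 2 * s := by nlinarith [Real.log_two_gt_d9]
  have hXpos : (0:ℝ) < (2:ℝ)^s := Real.rpow_pos_of_pos h2 s
  have hXm : (2:ℝ)^s ≤ 2^m := by
    rw [← Real.rpow_natCast 2 m]
    exact Real.rpow_le_rpow_of_exponent_le one_le_two hsm
  have hmpos : (0:ℝ) < 2^m := by positivity
  have hm1 : (2:ℝ)^(m+1) = 2 * 2^m := by rw [pow_succ]; ring
  rw [Real.rpow_neg h2.le, inv_eq_one_div, div_le_iff₀ hXpos, hm1]
  have hu : s / (2 * 2^m) * (2:ℝ)^s ≤ (2:ℝ)^s - 1 := by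
    rw [div_mul_eq_mul_div, div_le_iff₀ (by positivity : (0:ℝ) < 2 * 2^m)]
    nlinarith
  nlinarith [hu]

private lemma lintegral_ball_rpow (m : ℕ) {p R : ℝ} (hp : 0 < p) (hpm : p < m) (hR : 0 < R) :
    ∫⁻ w in Metric.closedBall (0 : EuclideanSpace ℝ (Fin m)) R, ENNReal.ofReal (‖w‖ ^ (-p))
      ≤ ENNReal.ofReal (R ^ ((m:ℝ) - p) * 2 ^ p * (2 ^ (m+1) / ((m:ℝ) - p)))
        * volume (Metric.closedBall (0 : EuclideanSpace ℝ (Fin m)) 1) := by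
  set E := EuclideanSpace ℝ (Fin m)
  set V := volume (Metric.closedBall (0 : E) 1) with hV
  set s := (m:ℝ) - p with hsdef
  have hs : 0 < s := by simp only [hsdef]; linarith
  have hsm : s ≤ m := by simp only [hsdef]; linarith
  have h2 : (0:ℝ) < 2 := by norm_num
  set f : E → ENNReal := fun w => ENNReal.ofReal (‖w‖ ^ (-p)) with hf
  set r : ℕ → ℝ := fun k => R * (2:ℝ)^(-(k:ℝ)) with hr
  have hrpos : ∀ k, 0 < r k := fun k => mul_pos hR (Real.rpow_pos_of_pos h2 _)
  set A : ℕ → Set E := fun k => Metric.closedBall 0 (r k) \ Metric.closedBall 0 (r (k+1)) with hA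
  -- covering
  have hcov : Metric.closedBall (0:E) R ⊆ {0} ∪ ⋃ k, A k := by
    intro w hw
    rcases eq_or_ne w 0 with h0 | h0
    · exact Or.inl h0
    have hwpos : 0 < ‖w‖ := norm_pos_iff.2 h0
    have hwR : ‖w‖ ≤ R := mem_closedBall_zero_iff.1 hw
    have hex : ∃ n : ℕ, r (n+1) < ‖w‖ := by
      obtain ⟨n, hn⟩ := exists_pow_lt_of_lt_one (div_pos hwpos hR) (by norm_num : (1:ℝ)/2 < 1)
      refine ⟨n, ?_⟩
      have hhalf : ((1:ℝ)/2)^(n+1) = (2:ℝ)^(-((n+1:ℕ):ℝ)) := by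
        rw [Real.rpow_neg h2.le, Real.rpow_natCast, one_div, inv_pow]
      have hle : ((1:ℝ)/2)^(n+1) ≤ ((1:ℝ)/2)^n :=
        pow_le_pow_of_le_one (by norm_num) (by norm_num) (Nat.le_succ n)
      have hrn : r (n+1) = R * ((1:ℝ)/2)^(n+1) := by rw [hr, hhalf]
      rw [hrn]
      calc R * ((1:ℝ)/2)^(n+1) ≤ R * ((1:ℝ)/2)^n := by nlinarith
        _ < ‖w‖ := by rw [mul_comm, ← lt_div_iff₀ hR]; exact hn
    right
    refine mem_iUnion.2 ⟨Nat.find hex, ?_, ?_⟩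
    · apply mem_closedBall_zero_iff.2
      rcases Nat.eq_zero_or_pos (Nat.find hex) with h | h
      · rw [h]; simpa [hr] using hwR
      · obtain ⟨j, hj⟩ := Nat.exists_eq_succ_of_ne_zero h.ne'
        rw [hj]
        have := Nat.find_min hex (by omega : j < Nat.find hex)
        exact le_of_not_gt (by simpa using this)
    · intro hmem
      exact absurd (mem_closedBall_zero_iff.1 hmem) (not_le.2 (Nat.find_spec hex))
  -- lintegral over {0} is zero
  have hzero : ∫⁻ w in ({0} : Set E), f w = 0 := by
    have hb0 : ∀ w ∈ ({0} : Set E), f w ≤ (fun _ : E => (0:ENNReal)) w := by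
      intro w hw
      simp only [mem_singleton_iff] at hw
      simp [hf, hw, Real.zero_rpow (by linarith : -p ≠ 0)]
    have h : (∫⁻ w in ({0} : Set E), f w) ≤ ∫⁻ _ in ({0} : Set E), (0:ENNReal) :=
      setLIntegral_mono' (measurableSet_singleton 0) hb0
    exact le_antisymm (by simpa using h) zero_le
  -- termwise bound
  set q : ENNReal := ENNReal.ofReal ((2:ℝ)^(-s)) with hq
  have hterm : ∀ k, ∫⁻ w in A k, f w ≤ (ENNReal.ofReal (R^s * 2^p) * V) * q^k := by
    intro k
    have hb : ∀ w ∈ A k, f w ≤ ENNReal.ofReal ((r (k+1))^(-p)) := by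
      intro w hw
      have hlt : r (k+1) < ‖w‖ :=
        lt_of_not_ge fun hcon => hw.2 (mem_closedBall_zero_iff.2 hcon)
      exact ENNReal.ofReal_le_ofReal
        (Real.rpow_le_rpow_of_nonpos (hrpos _) hlt.le (by linarith))
    have hAm : MeasurableSet (A k) := measurableSet_closedBall.diff measurableSet_closedBall
    have hreal : (r (k+1))^(-p) * (r k)^m = (R^s * 2^p) * ((2:ℝ)^(-s))^k := by
      have hcast : r (k+1) = R * (2:ℝ)^(-((k:ℝ)+1)) := by
        rw [hr]; push_cast; ring_nf
      have hnat : (r k)^m = (r k)^((m:ℕ):ℝ) := (Real.rpow_natCast _ m).symm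
      have hqk : ((2:ℝ)^(-s))^k = (2:ℝ)^(-(s*(k:ℝ))) := by
        rw [← Real.rpow_natCast ((2:ℝ)^(-s)) k, ← Real.rpow_mul h2.le]
        ring_nf
      rw [hcast, hnat, keycalc R p hR k (m:ℝ), ← hsdef, hqk]
      all_goals ring
    calc ∫⁻ w in A k, f w ≤ ∫⁻ _ in A k, ENNReal.ofReal ((r (k+1))^(-p)) :=
          setLIntegral_mono' hAm hb
      _ = ENNReal.ofReal ((r (k+1))^(-p)) * volume (A k) := setLIntegral_const _ _
      _ ≤ ENNReal.ofReal ((r (k+1))^(-p)) * volume (Metric.closedBall (0:E) (r k)) :=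
          mul_le_mul_right (measure_mono diff_subset) _
      _ = ENNReal.ofReal ((r (k+1))^(-p)) * (ENNReal.ofReal ((r k)^m) * V) := by
          rw [Measure.addHaar_closedBall' _ _ (hrpos k).le, finrank_euclideanSpace_fin]
      _ = ENNReal.ofReal ((r (k+1))^(-p) * ((r k)^m)) * V := by
          rw [ENNReal.ofReal_mul (Real.rpow_nonneg (hrpos _).le _), mul_assoc]
      _ = (ENNReal.ofReal (R^s * 2^p) * V) * q^k := by
          rw [hreal, ENNReal.ofReal_mul (show (0:ℝ) ≤ R^s * 2^p from
              mul_nonneg (Real.rpow_nonneg hR.le _) (Real.rpow_nonneg h2.le _)),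
            ENNReal.ofReal_pow (by positivity : (0:ℝ) ≤ (2:ℝ)^(-s))]
          ring
  -- geometric series bound
  have hgeom : (1 - q)⁻¹ ≤ ENNReal.ofReal (2^(m+1) / s) := by
    have hle : (2:ℝ)^(-s) ≤ 1 - s / 2^(m+1) := geom_aux m hs hsm
    have hnn : (0:ℝ) ≤ 1 - s / 2^(m+1) :=
      le_trans (Real.rpow_nonneg h2.le _) hle
    have hsplit : (1:ENNReal) = ENNReal.ofReal (s / 2^(m+1)) + ENNReal.ofReal (1 - s/2^(m+1)) := by
      rw [← ENNReal.ofReal_add (div_nonneg hs.le (by positivity)) hnn,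
        show s/2^(m+1) + (1 - s/2^(m+1)) = (1:ℝ) by ring, ENNReal.ofReal_one]
    have hsub : ENNReal.ofReal (s / 2^(m+1)) ≤ 1 - q := by
      apply ENNReal.le_sub_of_add_le_right ENNReal.ofReal_ne_top
      rw [hsplit]
      exact add_le_add le_rfl (ENNReal.ofReal_le_ofReal hle)
    calc (1 - q)⁻¹ ≤ (ENNReal.ofReal (s / 2^(m+1)))⁻¹ := ENNReal.inv_le_inv.2 hsub
      _ = ENNReal.ofReal ((s / 2^(m+1))⁻¹) :=
          (ENNReal.ofReal_inv_of_pos (div_pos hs (by positivity))).symm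
      _ = ENNReal.ofReal (2^(m+1) / s) := by rw [inv_div]
  calc ∫⁻ w in Metric.closedBall (0:E) R, f w
      ≤ ∫⁻ w in ({0} ∪ ⋃ k, A k : Set E), f w := lintegral_mono_set hcov
    _ ≤ (∫⁻ w in ({0} : Set E), f w) + ∫⁻ w in (⋃ k, A k), f w := lintegral_union_le _ _ _
    _ = ∫⁻ w in (⋃ k, A k), f w := by rw [hzero, zero_add]
    _ ≤ ∑' k, ∫⁻ w in A k, f w := lintegral_iUnion_le _ _
    _ ≤ ∑' k, (ENNReal.ofReal (R^s * 2^p) * V) * q^k := ENNReal.tsum_le_tsum hterm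
    _ = (ENNReal.ofReal (R^s * 2^p) * V) * ∑' k, q^k := ENNReal.tsum_mul_left
    _ = (ENNReal.ofReal (R^s * 2^p) * V) * (1 - q)⁻¹ := by rw [ENNReal.tsum_geometric]
    _ ≤ (ENNReal.ofReal (R^s * 2^p) * V) * ENNReal.ofReal (2^(m+1) / s) :=
        mul_le_mul_right hgeom _
    _ = ENNReal.ofReal (R ^ s * 2 ^ p * (2 ^ (m+1) / s)) * V := by
        rw [ENNReal.ofReal_mul (show (0:ℝ) ≤ R^s * 2^p from
          mul_nonneg (Real.rpow_nonneg hR.le _) (Real.rpow_nonneg h2.le _))]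
        ring

/-- Lemma A.2: convolution bound on the ball of radius `ℓ` around `z`, trading a power
of `ℓ` for decay in the Japanese bracket `⟨z⟩ = (1 + ‖z‖²)^{1/2}`. -/
theorem convolution_near (m : ℕ) (hm : 0 < m) :
    ∃ C : ℝ, 1 < C ∧ ∀ p α ℓ : ℝ, p ∈ Set.Ioo (0:ℝ) (m:ℝ) → α ∈ Set.Ioo (0:ℝ) p → 1 ≤ ℓ →
      ∀ z : EuclideanSpace ℝ (Fin m),
        (∫ w in {w : EuclideanSpace ℝ (Fin m) | ‖z - w‖ ≤ ℓ}, ‖w‖ ^ (-p))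
          ≤ C / ((m:ℝ) - p) * ℓ ^ ((m:ℝ) - p + α) * (1 + ‖z‖ ^ 2) ^ (-α / 2) := by
  classical
  set E := EuclideanSpace ℝ (Fin m)
  set V := volume (Metric.closedBall (0 : E) 1) with hV
  have hVne : V ≠ ⊤ := measure_closedBall_lt_top.ne
  set K := V.toReal with hKdef
  have hK0 : 0 ≤ K := ENNReal.toReal_nonneg
  refine ⟨(K + 1) * 2 * 60 ^ m + 2, by
    nlinarith [mul_pos (mul_pos (by linarith : (0:ℝ) < K+1) two_pos)
      (pow_pos (by norm_num : (0:ℝ) < 60) m)], ?_⟩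
  set C : ℝ := (K + 1) * 2 * 60 ^ m + 2 with hCdef
  have hC0 : (0:ℝ) < C := by positivity
  intro p α ℓ hp hα hℓ z
  obtain ⟨hp0, hpm⟩ := hp
  obtain ⟨hα0, hαp⟩ := hα
  have hℓ0 : (0:ℝ) < ℓ := lt_of_lt_of_le one_pos hℓ
  set s : ℝ := (m:ℝ) - p with hsdef
  have hs : 0 < s := by simp only [hsdef]; linarith
  have hsm : s ≤ m := by simp only [hsdef]; linarith
  have h2 : (0:ℝ) < 2 := by norm_num
  have h1m : (1:ℝ) ≤ (m:ℝ) := by exact_mod_cast hm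
  have hSet : {w : E | ‖z - w‖ ≤ ℓ} = Metric.closedBall z ℓ := by
    ext w
    simp only [mem_setOf_eq, Metric.mem_closedBall, dist_eq_norm, norm_sub_rev z w]
    exact Iff.of_eq (congrArg (· ≤ ℓ) (dist_eq_norm w z).symm)
  have hint : (∫ w in {w : E | ‖z - w‖ ≤ ℓ}, ‖w‖ ^ (-p))
      = (∫⁻ w in Metric.closedBall z ℓ, ENNReal.ofReal (‖w‖ ^ (-p))).toReal := by
    rw [hSet]
    exact integral_eq_lintegral_of_nonneg_ae
      (Filter.Eventually.of_forall fun w => Real.rpow_nonneg (norm_nonneg w) _)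
      (Measurable.aestronglyMeasurable (by fun_prop))
  set RHS : ℝ := C / s * ℓ ^ (s + α) * (1 + ‖z‖ ^ 2) ^ (-α / 2) with hRHSdef
  have hRHS0 : 0 ≤ RHS := by
    rw [hRHSdef]
    exact mul_nonneg (mul_nonneg (div_nonneg hC0.le hs.le) (Real.rpow_nonneg hℓ0.le _))
      (Real.rpow_nonneg (show (0:ℝ) ≤ 1 + ‖z‖^2 by positivity) _)
  rw [hint]
  suffices hL : (∫⁻ w in Metric.closedBall z ℓ, ENNReal.ofReal (‖w‖ ^ (-p)))
      ≤ ENNReal.ofReal RHS by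
    calc (∫⁻ w in Metric.closedBall z ℓ, ENNReal.ofReal (‖w‖ ^ (-p))).toReal
        ≤ (ENNReal.ofReal RHS).toReal := ENNReal.toReal_mono ENNReal.ofReal_ne_top hL
      _ = RHS := ENNReal.toReal_ofReal hRHS0
  -- common power facts
  have c2 : (2:ℝ) ^ p ≤ 2 ^ m := by
    rw [← Real.rpow_natCast 2 m]
    exact Real.rpow_le_rpow_of_exponent_le one_le_two (by linarith)
  rcases le_or_gt ‖z‖ (2 * ℓ) with hz | hz
  · -- CASE A : near the origin
    have hsub : Metric.closedBall z ℓ ⊆ Metric.closedBall (0:E) (3*ℓ) := by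
      apply Metric.closedBall_subset_closedBall'
      rw [dist_zero_right]
      linarith
    have h3ℓ : (0:ℝ) < 3 * ℓ := by linarith
    calc (∫⁻ w in Metric.closedBall z ℓ, ENNReal.ofReal (‖w‖ ^ (-p)))
        ≤ ∫⁻ w in Metric.closedBall (0:E) (3*ℓ), ENNReal.ofReal (‖w‖ ^ (-p)) :=
          lintegral_mono_set hsub
      _ ≤ ENNReal.ofReal ((3*ℓ) ^ s * 2 ^ p * (2 ^ (m+1) / s)) * V := by
          have := lintegral_ball_rpow m hp0 hpm h3ℓ
          rw [← hsdef] at this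
          exact this
      _ = ENNReal.ofReal ((3*ℓ) ^ s * 2 ^ p * (2 ^ (m+1) / s)) * ENNReal.ofReal K := by
          rw [hKdef, ENNReal.ofReal_toReal hVne]
      _ = ENNReal.ofReal ((3*ℓ) ^ s * 2 ^ p * (2 ^ (m+1) / s) * K) :=
          (ENNReal.ofReal_mul (show (0:ℝ) ≤ (3*ℓ)^s * 2^p * (2^(m+1)/s) from
            mul_nonneg (mul_nonneg (Real.rpow_nonneg (by linarith) _)
              (Real.rpow_nonneg h2.le _)) (div_nonneg (by positivity) hs.le))).symm
      _ ≤ ENNReal.ofReal RHS := by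
          apply ENNReal.ofReal_le_ofReal
          rw [hRHSdef]
          -- power facts for case A
          have c3 : (3:ℝ) ^ s ≤ 3 ^ m := by
            rw [← Real.rpow_natCast 3 m]
            exact Real.rpow_le_rpow_of_exponent_le (by norm_num) hsm
          have c5 : (5:ℝ) ^ (α/2) ≤ 5 ^ m := by
            rw [← Real.rpow_natCast 5 m]
            exact Real.rpow_le_rpow_of_exponent_le (by norm_num) (by linarith)
          have hA8 : (3:ℝ)^s * 2^p * 2^(m+1) * 5^(α/2) ≤ 2 * 60^m := by
            have t1 : (3:ℝ)^s * 2^p ≤ 3^m * 2^m := by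
              apply mul_le_mul c3 c2 (by positivity) (by positivity)
            have t2 : (3:ℝ)^s * 2^p * 2^(m+1) ≤ 3^m * 2^m * 2^(m+1) :=
              mul_le_mul_of_nonneg_right t1 (by positivity)
            have t3 : (3:ℝ)^s * 2^p * 2^(m+1) * 5^(α/2) ≤ 3^m * 2^m * 2^(m+1) * 5^m :=
              mul_le_mul t2 c5 (by positivity) (by positivity)
            have h60 : (3:ℝ)^m * 2^m * 2^m * 5^m = 60^m := by
              rw [← mul_pow, ← mul_pow, ← mul_pow]; norm_num
            have heq : (3:ℝ)^m * 2^m * 2^(m+1) * 5^m = 2 * 60^m := by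
              rw [pow_succ]
              linear_combination 2 * h60
            linarith
          have hconst : (3:ℝ)^s * 2^p * 2^(m+1) * 5^(α/2) * K ≤ C := by
            have h1 : (3:ℝ)^s * 2^p * 2^(m+1) * 5^(α/2) * K ≤ 2 * 60^m * K :=
              mul_le_mul_of_nonneg_right hA8 hK0
            have h2' : (2:ℝ) * 60^m * K ≤ C := by
              rw [hCdef]
              nlinarith [pow_pos (by norm_num : (0:ℝ) < 60) m]
            linarith
          have h5mul : (5:ℝ)^(α/2) * 5^(-α/2) = 1 := by
            rw [← Real.rpow_add (by norm_num : (0:ℝ) < 5),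
              show α/2 + -α/2 = (0:ℝ) by ring, Real.rpow_zero]
          have h5pos : (0:ℝ) < 5^(-α/2) := by positivity
          have hmain : (3:ℝ)^s * 2^p * 2^(m+1) * K ≤ C * 5^(-α/2) := by
            calc (3:ℝ)^s * 2^p * 2^(m+1) * K
                = ((3:ℝ)^s * 2^p * 2^(m+1) * 5^(α/2) * K) * 5^(-α/2) := by
                  linear_combination (-((3:ℝ)^s * 2^p * 2^(m+1) * K)) * h5mul
              _ ≤ C * 5^(-α/2) := mul_le_mul_of_nonneg_right hconst h5pos.le
          -- bracket facts
          have e35 : (1:ℝ) + ‖z‖^2 ≤ 5 * ℓ^2 := by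
            nlinarith [norm_nonneg z, mul_le_mul hz hz (norm_nonneg z)
              (by linarith : (0:ℝ) ≤ 2*ℓ), mul_le_mul hℓ hℓ zero_le_one (by linarith : (0:ℝ) ≤ ℓ)]
          have ebr : (5 * ℓ^2 : ℝ) ^ (-α/2) ≤ (1 + ‖z‖^2) ^ (-α/2) :=
            Real.rpow_le_rpow_of_nonpos (by positivity) e35 (by linarith)
          have e5 : (5 * ℓ^2 : ℝ) ^ (-α/2) = 5 ^ (-α/2) * ℓ ^ (-α) := by
            rw [Real.mul_rpow (by norm_num) (by positivity),
              ← Real.rpow_natCast ℓ 2, ← Real.rpow_mul hℓ0.le]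
            congr 1
            push_cast
            ring
          have eℓ : ℓ ^ (s + α) = ℓ ^ s * ℓ ^ α := Real.rpow_add hℓ0 _ _
          have eℓα : ℓ ^ α * ℓ ^ (-α) = 1 := by
            rw [← Real.rpow_add hℓ0]; simp
          have e3 : (3*ℓ:ℝ) ^ s = 3 ^ s * ℓ ^ s := Real.mul_rpow (by norm_num) hℓ0.le
          calc (3*ℓ) ^ s * 2 ^ p * (2 ^ (m+1) / s) * K
              = ((3:ℝ)^s * 2^p * 2^(m+1) * K) * (ℓ^s / s) := by rw [e3]; ring
            _ ≤ (C * 5^(-α/2)) * (ℓ^s / s) :=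
                mul_le_mul_of_nonneg_right hmain
                  (div_nonneg (Real.rpow_nonneg hℓ0.le _) hs.le)
            _ = C / s * ℓ ^ (s + α) * (5 * ℓ^2 : ℝ) ^ (-α/2) := by
                rw [eℓ, e5]
                linear_combination (-(C * 5^(-α/2) * ℓ^s / s)) * eℓα
            _ ≤ C / s * ℓ ^ (s + α) * (1 + ‖z‖ ^ 2) ^ (-α / 2) :=
                mul_le_mul_of_nonneg_left ebr
                  (mul_nonneg (div_nonneg hC0.le hs.le) (Real.rpow_nonneg hℓ0.le _))
  · -- CASE B : far from the origin
    have hz0 : (0:ℝ) < ‖z‖ := by linarith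
    have hhalf : (0:ℝ) < ‖z‖ / 2 := by linarith
    have hℓz : ℓ ≤ ‖z‖ := by linarith
    have hb : ∀ w ∈ Metric.closedBall z ℓ,
        ENNReal.ofReal (‖w‖ ^ (-p)) ≤ ENNReal.ofReal ((‖z‖/2) ^ (-p)) := by
      intro w hw
      have hd : dist w z ≤ ℓ := Metric.mem_closedBall.1 hw
      have h1 : ‖z‖ - ‖w‖ ≤ ‖z - w‖ := norm_sub_norm_le z w
      have h2' : ‖z - w‖ = dist w z := by rw [dist_eq_norm, norm_sub_rev]
      have hlow : ‖z‖ / 2 ≤ ‖w‖ := by rw [h2'] at h1; linarith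
      exact ENNReal.ofReal_le_ofReal
        (Real.rpow_le_rpow_of_nonpos hhalf hlow (by linarith))
    calc (∫⁻ w in Metric.closedBall z ℓ, ENNReal.ofReal (‖w‖ ^ (-p)))
        ≤ ∫⁻ _ in Metric.closedBall z ℓ, ENNReal.ofReal ((‖z‖/2) ^ (-p)) :=
          setLIntegral_mono' measurableSet_closedBall hb
      _ = ENNReal.ofReal ((‖z‖/2) ^ (-p)) * volume (Metric.closedBall z ℓ) :=
          setLIntegral_const _ _
      _ = ENNReal.ofReal ((‖z‖/2) ^ (-p)) * (ENNReal.ofReal (ℓ^m) * V) := by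
          rw [Measure.addHaar_closedBall' _ _ hℓ0.le, finrank_euclideanSpace_fin]
      _ = ENNReal.ofReal ((‖z‖/2) ^ (-p)) * ENNReal.ofReal (ℓ^m) * ENNReal.ofReal K := by
          rw [hKdef, ENNReal.ofReal_toReal hVne, mul_assoc]
      _ = ENNReal.ofReal ((‖z‖/2) ^ (-p) * ℓ^m * K) := by
          rw [ENNReal.ofReal_mul (show (0:ℝ) ≤ (‖z‖/2)^(-p) * ℓ^m from
              mul_nonneg (Real.rpow_nonneg hhalf.le _) (by positivity)),
            ENNReal.ofReal_mul (Real.rpow_nonneg hhalf.le _)]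
      _ ≤ ENNReal.ofReal RHS := by
          apply ENNReal.ofReal_le_ofReal
          rw [hRHSdef]
          have ea : (‖z‖/2:ℝ) ^ (-p) = ‖z‖^(-p) * 2^p := by
            rw [Real.div_rpow (norm_nonneg z) h2.le, Real.rpow_neg h2.le,
              div_eq_mul_inv, inv_inv]
          have em : (ℓ:ℝ)^m = ℓ^(s+α) * ℓ^(p-α) := by
            rw [← Real.rpow_natCast ℓ m, ← Real.rpow_add hℓ0]
            congr 1
            rw [hsdef]; ring
          have eℓz : ℓ^(p-α) ≤ ‖z‖^(p-α) :=
            Real.rpow_le_rpow hℓ0.le hℓz (by linarith)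
          have ezz : ‖z‖^(-p) * ‖z‖^(p-α) = ‖z‖^(-α) := by
            rw [← Real.rpow_add hz0]; ring_nf
          have hz1 : (2:ℝ) ≤ ‖z‖ := by linarith
          have e2b : (1:ℝ) + ‖z‖^2 ≤ 2 * ‖z‖^2 := by
            nlinarith [mul_le_mul hz1 hz1 zero_le_two (norm_nonneg z)]
          have ebr2 : (2 * ‖z‖^2 : ℝ) ^ (-α/2) ≤ (1 + ‖z‖^2) ^ (-α/2) :=
            Real.rpow_le_rpow_of_nonpos (by positivity) e2b (by linarith)
          have e2z : (2 * ‖z‖^2 : ℝ) ^ (-α/2) = 2^(-α/2) * ‖z‖^(-α) := by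
            rw [Real.mul_rpow h2.le (by positivity),
              ← Real.rpow_natCast ‖z‖ 2, ← Real.rpow_mul hz0.le]
            congr 1
            push_cast
            ring
          have c2α : (2:ℝ)^(α/2) ≤ 2^m := by
            rw [← Real.rpow_natCast 2 m]
            exact Real.rpow_le_rpow_of_exponent_le one_le_two (by linarith)
          have hs2m : s ≤ (2:ℝ)^m := by
            have : (m:ℝ) < 2^m := by exact_mod_cast Nat.lt_two_pow_self
            linarith
          have h8 : (2:ℝ)^p * 2^(α/2) * s ≤ 8^m := by
            have t1 : (2:ℝ)^p * 2^(α/2) ≤ 2^m * 2^m :=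
              mul_le_mul c2 c2α (by positivity) (by positivity)
            have t2 : (2:ℝ)^p * 2^(α/2) * s ≤ 2^m * 2^m * 2^m :=
              mul_le_mul t1 hs2m hs.le (by positivity)
            have h8e : (8:ℝ)^m = 2^m * 2^m * 2^m := by
              rw [show (8:ℝ) = 2*2*2 by norm_num, mul_pow, mul_pow]
            linarith [h8e ▸ t2]
          have hconstB : (2:ℝ)^p * 2^(α/2) * s * K ≤ C := by
            have h1 : (2:ℝ)^p * 2^(α/2) * s * K ≤ 8^m * K :=
              mul_le_mul_of_nonneg_right h8 hK0
            have h860 : (8:ℝ)^m ≤ 60^m := pow_le_pow_left₀ (by norm_num) (by norm_num) m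
            have h2' : (8:ℝ)^m * K ≤ C := by
              rw [hCdef]
              nlinarith [pow_pos (by norm_num : (0:ℝ) < 60) m,
                mul_le_mul_of_nonneg_right h860 hK0]
            linarith
          have h2mul : (2:ℝ)^(α/2) * 2^(-α/2) = 1 := by
            rw [← Real.rpow_add h2, show α/2 + -α/2 = (0:ℝ) by ring, Real.rpow_zero]
          have h2neg : (0:ℝ) < 2^(-α/2) := by positivity
          have hmainB : (2:ℝ)^p * K ≤ C / s * 2^(-α/2) := by
            rw [div_mul_eq_mul_div, le_div_iff₀ hs]
            calc (2:ℝ)^p * K * s = ((2:ℝ)^p * 2^(α/2) * s * K) * 2^(-α/2) := by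
                  linear_combination (-((2:ℝ)^p * K * s)) * h2mul
              _ ≤ C * 2^(-α/2) := mul_le_mul_of_nonneg_right hconstB h2neg.le
          calc (‖z‖/2:ℝ) ^ (-p) * ℓ^m * K
              = ((2:ℝ)^p * K) * (ℓ^(s+α) * (‖z‖^(-p) * ℓ^(p-α))) := by
                rw [ea, em]; ring
            _ ≤ ((2:ℝ)^p * K) * (ℓ^(s+α) * (‖z‖^(-p) * ‖z‖^(p-α))) := by
                apply mul_le_mul_of_nonneg_left _ (mul_nonneg (Real.rpow_nonneg h2.le _) hK0)
                apply mul_le_mul_of_nonneg_left _ (Real.rpow_nonneg hℓ0.le _)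
                exact mul_le_mul_of_nonneg_left eℓz (Real.rpow_nonneg (norm_nonneg z) _)
            _ = ((2:ℝ)^p * K) * (ℓ^(s+α) * ‖z‖^(-α)) := by rw [ezz]
            _ ≤ (C / s * 2^(-α/2)) * (ℓ^(s+α) * ‖z‖^(-α)) :=
                mul_le_mul_of_nonneg_right hmainB
                  (mul_nonneg (Real.rpow_nonneg hℓ0.le _) (Real.rpow_nonneg (norm_nonneg z) _))
            _ = C / s * ℓ ^ (s + α) * (2 * ‖z‖^2 : ℝ) ^ (-α/2) := by
                rw [e2z]; ring
            _ ≤ C / s * ℓ ^ (s + α) * (1 + ‖z‖ ^ 2) ^ (-α / 2) :=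
                mul_le_mul_of_nonneg_left ebr2
                  (mul_nonneg (div_nonneg hC0.le hs.le) (Real.rpow_nonneg hℓ0.le _))
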